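/- arXiv:1803.05078 — 6 statements merged into one kernel-verified Lean document; each statement's English description precedes it below -/
import Mathlib

section
/- Conversely, let (W, ≼) be a poset and S : W → W an arbitrary function. If for every ≼-monotone valuation V and every formula φ the truth set ⟦φ⟧ is ≼-monotone, then S is forward confluent, i.e., w ≼ v implies S(w) ≼ S(v). -/
inductive TForm : Type where
  | atom : ℕ → TForm
  | bot : TForm
  | and : TForm → TForm → TForm
  | or : TForm → TForm → TForm
  | imp : TForm → TForm → TForm
  | next : TForm → TForm
  | dia : TForm → TForm
  | box : TForm → TForm
  | untl : TForm → TForm → TForm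
  | rels : TForm → TForm → TForm

/-- Intuitionistic temporal satisfaction over a dynamic poset `(W, ≤, S)`
with valuation `V`. -/
def sat {W : Type} [PartialOrder W] (S : W → W) (V : W → ℕ → Prop) : TForm → W → Prop
  | .atom p, w => V w p
  | .bot, _ => False
  | .and φ ψ, w => sat S V φ w ∧ sat S V ψ w
  | .or φ ψ, w => sat S V φ w ∨ sat S V ψ w
  | .imp φ ψ, w => ∀ v, w ≤ v → sat S V φ v → sat S V ψ v
  | .next φ, w => sat S V φ (S w)
  | .dia φ, w => ∃ k, sat S V φ (S^[k] w)
  | .box φ, w => ∀ k, sat S V φ (S^[k] w)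
  | .untl φ ψ, w => ∃ k, sat S V ψ (S^[k] w) ∧ ∀ i < k, sat S V φ (S^[i] w)
  | .rels φ ψ, w => ∀ k, sat S V ψ (S^[k] w) ∨ ∃ i < k, sat S V φ (S^[i] w)

/-- Formulas using only the connectives ⊥, ∧, ∨, →, and {next, dia, box}. -/
def NoUR : TForm → Prop
  | .atom _ => True
  | .bot => True
  | .and φ ψ => NoUR φ ∧ NoUR ψ
  | .or φ ψ => NoUR φ ∧ NoUR ψ
  | .imp φ ψ => NoUR φ ∧ NoUR ψ
  | .next φ => NoUR φ
  | .dia φ => NoUR φ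
  | .box φ => NoUR φ
  | .untl _ _ => False
  | .rels _ _ => False

/-- If every truth set of every formula (in the ◯,◇,□ language) is `≤`-monotone
for every monotone valuation, then `S` is forward confluent. -/
theorem forward_confluent_of_truth_monotone {W : Type} [PartialOrder W] (S : W → W)
    (h : ∀ V : W → ℕ → Prop, (∀ w v : W, w ≤ v → ∀ p, V w p → V v p) →
      ∀ φ, NoUR φ → ∀ w v : W, w ≤ v → sat S V φ w → sat S V φ v) :
    ∀ w v : W, w ≤ v → S w ≤ S v := by
  intro w v hwv
  have := h (fun u _ => S w ≤ u) (fun a b hab p hp => le_trans hp hab)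
    (.next (.atom 0)) trivial w v hwv (le_refl (S w))
  exact this
end

section
/- The formula □(φ → ◯φ) → (φ → □φ) (the induction axiom) is valid over all ITL^e models: for every model M = (W, ≼, S, V) and every world w, M, w ⊨ □(φ → ◯φ) → (φ → □φ). -/
/-- Intuitionistic biimplication as a defined connective. -/
def TForm.biimp (φ ψ : TForm) : TForm := .and (.imp φ ψ) (.imp ψ φ)

/-- The induction axiom □(φ → ◯φ) → (φ → □φ) is ITL^e-valid. -/
theorem induction_axiom_valid {W : Type} [PartialOrder W] (S : W → W) (V : W → ℕ → Prop)
    (hS : ∀ w v : W, w ≤ v → S w ≤ S v)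
    (hV : ∀ w v : W, w ≤ v → ∀ p, V w p → V v p)
    (φ : TForm) (w : W) :
    sat S V (.imp (.box (.imp φ (.next φ))) (.imp φ (.box φ))) w := by
  intro v hwv hbox u hvu hφ k
  have hle : ∀ k : ℕ, S^[k] v ≤ S^[k] u := by
    intro k
    induction k with
    | zero => exact hvu
    | succ n ih => simpa [Function.iterate_succ_apply'] using hS _ _ ih
  induction k with
  | zero => exact hφ
  | succ n ih =>
    have := hbox n (S^[n] u) (hle n) ih
    simpa [sat, Function.iterate_succ_apply'] using this
end

section
/- The formulas (◯p → ◯q) → ◯(p → q) and (◇p → □q) → □(p → q) are not valid over the class of ITL^e models: there exists a finite ITL^e model with a world falsifying both formulas. -/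
/-- The Fischer Servi formulas (◯p → ◯q) → ◯(p → q) and (◇p → □q) → □(p → q)
are not ITL^e-valid: some finite ITL^e model falsifies both at some world. -/
theorem fischer_servi_not_valid :
    ∃ (W : Type) (inst : PartialOrder W) (_ : Fintype W)
      (S : W → W) (V : W → ℕ → Prop),
      (∀ w v : W, inst.le w v → inst.le (S w) (S v)) ∧
      (∀ w v : W, inst.le w v → ∀ p, V w p → V v p) ∧
      ∃ (w : W) (p q : ℕ),
        ¬ @sat W inst S V
            (.imp (.imp (.next (.atom p)) (.next (.atom q)))
                  (.next (.imp (.atom p) (.atom q)))) w ∧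
        ¬ @sat W inst S V
            (.imp (.imp (.dia (.atom p)) (.box (.atom q)))
                  (.box (.imp (.atom p) (.atom q)))) w := by
  let inst : PartialOrder (Fin 3) :=
    { le := fun a b => a = b ∨ (a = 1 ∧ b = 2)
      lt := fun a b => (a = b ∨ (a = 1 ∧ b = 2)) ∧ ¬(b = a ∨ (b = 1 ∧ a = 2))
      lt_iff_le_not_ge := fun _ _ => Iff.rfl
      le_refl := fun a => Or.inl rfl
      le_trans := by
        rintro a b c (rfl | ⟨rfl, rfl⟩) h2
        · exact h2
        · rcases h2 with rfl | ⟨h, _⟩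
          · exact Or.inr ⟨rfl, rfl⟩
          · exact absurd h (by decide)
      le_antisymm := by
        rintro a b (rfl | ⟨rfl, rfl⟩) h2
        · rfl
        · rcases h2 with h | ⟨h, _⟩ <;> exact absurd h (by decide) }
  refine ⟨Fin 3, inst, inferInstance,
    fun a => if a = 0 then 1 else a,
    fun a p => a = 2 ∧ p = 0, ?_, ?_, 0, 0, 1, ?_, ?_⟩
  · rintro w v (rfl | ⟨rfl, rfl⟩)
    · exact Or.inl rfl
    · exact Or.inr ⟨rfl, rfl⟩
  · intro w v h p hp; rcases h with rfl | ⟨_, rfl⟩ <;> simp_all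
  · intro h
    have := h 0 (Or.inl rfl) (fun v hv hp => by
      rcases hv with rfl | ⟨h1, _⟩
      · simp [sat] at hp
      · exact absurd h1 (by decide))
    have h2 := this 2 (Or.inr ⟨rfl, rfl⟩) ⟨rfl, rfl⟩
    exact absurd h2.2 one_ne_zero
  · intro h
    have := h 0 (Or.inl rfl) (fun v hv hp => by
      rcases hv with rfl | ⟨h1, _⟩
      · rcases hp with ⟨k, hk⟩
        exfalso
        cases k with
        | zero => simp [sat] at hk
        | succ n =>
          revert hk
          have h1 : (fun a : Fin 3 => if a = 0 then 1 else a)^[n+1] 0 = 1 := by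
            induction n with
            | zero => rfl
            | succ m ih => rw [Function.iterate_succ_apply', ih]; rfl
          rw [h1]; exact fun hk => by simp [sat] at hk
      · exact absurd h1 (by decide)) 1
    simp only [Function.iterate_one, sat] at this
    have h2 := this 2 (Or.inr ⟨rfl, rfl⟩) (by simp [sat])
    simp [sat] at h2
end

section
/- The formula (◯φ → ◯ψ) → ◯(φ → ψ) is valid over all persistent ITL^e models (models where S is both forward and backward confluent). -/
/-- The formula (◯φ → ◯ψ) → ◯(φ → ψ) is valid over persistent ITL^e models
(forward and backward confluent `S`). -/
theorem fischer_servi_next_persistent {W : Type} [PartialOrder W] (S : W → W) (V : W → ℕ → Prop)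
    (hS : ∀ w v : W, w ≤ v → S w ≤ S v)
    (hV : ∀ w v : W, w ≤ v → ∀ p, V w p → V v p)
    (hB : ∀ w v : W, S w ≤ v → ∃ u, w ≤ u ∧ S u = v)
    (φ ψ : TForm) (w : W) :
    sat S V (.imp (.imp (.next φ) (.next ψ)) (.next (.imp φ ψ))) w := by
  intro v hwv hv
  intro u hSvu hu
  obtain ⟨t, hvt, hSt⟩ := hB v u hSvu
  have := hv t hvt (by simpa [sat, hSt] using hu)
  simpa [sat, hSt] using this
end

section
/- The formula (◇φ → □ψ) → □(φ → ψ) is valid over all persistent ITL^e models. -/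
/-- The formula (◇φ → □ψ) → □(φ → ψ) is valid over persistent ITL^e models. -/
theorem fischer_servi_dia_box_persistent {W : Type} [PartialOrder W] (S : W → W) (V : W → ℕ → Prop)
    (hS : ∀ w v : W, w ≤ v → S w ≤ S v)
    (hV : ∀ w v : W, w ≤ v → ∀ p, V w p → V v p)
    (hB : ∀ w v : W, S w ≤ v → ∃ u, w ≤ u ∧ S u = v)
    (φ ψ : TForm) (w : W) :
    sat S V (.imp (.imp (.dia φ) (.box ψ)) (.box (.imp φ ψ))) w := by
  have hBk : ∀ k (w v : W), S^[k] w ≤ v → ∃ u, w ≤ u ∧ S^[k] u = v := by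
    intro k
    induction k with
    | zero => intro w v h; exact ⟨v, h, rfl⟩
    | succ k ih =>
      intro w v h
      rw [Function.iterate_succ_apply'] at h
      obtain ⟨u, hu, rfl⟩ := hB _ _ h
      obtain ⟨t, ht, rfl⟩ := ih w u hu
      exact ⟨t, ht, Function.iterate_succ_apply' S k t⟩
  intro v hwv hvd k u hku hφu
  obtain ⟨t, hvt, rfl⟩ := hBk k v u hku
  exact hvd t hvt ⟨k, hφu⟩ k
end

section
/- The weak connectedness schema □(□p → q) ∨ □(□q → p) is not valid over the class of temporal here-and-there models: there is a finite here-and-there model with a world falsifying this formula. -/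
/-- Worlds of a temporal here-and-there model: a base world together with a
bit indicating "here" (false) or "there" (true). -/
structure HTW (T : Type) where
  base : T
  bit : Bool

instance (T : Type) : PartialOrder (HTW T) where
  le a b := a.base = b.base ∧ a.bit ≤ b.bit
  le_refl a := ⟨rfl, le_refl _⟩
  le_trans a b c h1 h2 := ⟨h1.1.trans h2.1, le_trans h1.2 h2.2⟩
  le_antisymm a b h1 h2 := by
    cases a; cases b
    simp only [HTW.mk.injEq]
    exact ⟨h1.1, le_antisymm h1.2 h2.2⟩

/-- The weak connectedness schema □(□p → q) ∨ □(□q → p) is not valid over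
temporal here-and-there models: some finite here-and-there model (with
`S (t,i) = (f t, i)`, which is automatically persistent) falsifies it. -/
theorem weak_connectedness_not_HT_valid :
    ∃ (T : Type) (_ : Fintype T) (f : T → T) (V : HTW T → ℕ → Prop),
      (∀ w v : HTW T, w ≤ v → ∀ p, V w p → V v p) ∧
      ((∀ w v : HTW T, w ≤ v → (⟨f w.base, w.bit⟩ : HTW T) ≤ ⟨f v.base, v.bit⟩) ∧
       (∀ (w v : HTW T), (⟨f w.base, w.bit⟩ : HTW T) ≤ v →
          ∃ u : HTW T, w ≤ u ∧ (⟨f u.base, u.bit⟩ : HTW T) = v) ∧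
       ∃ (w : HTW T) (p q : ℕ),
         ¬ sat (fun x : HTW T => ⟨f x.base, x.bit⟩) V
             (.or (.box (.imp (.box (.atom p)) (.atom q)))
                  (.box (.imp (.box (.atom q)) (.atom p)))) w) := by
  refine ⟨Bool, inferInstance, fun _ => true,
    fun x n => (n = 0 ∧ x.base = true) ∨ (n = 1 ∧ x.bit = true), ?_, ?_, ?_, ?_⟩
  · rintro w v ⟨hb, hbit⟩ p (⟨h0, h1⟩ | ⟨h0, h1⟩)
    · exact Or.inl ⟨h0, hb ▸ h1⟩
    · exact Or.inr ⟨h0, le_antisymm (by simp) (h1 ▸ hbit)⟩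
  · rintro w v ⟨hb, hbit⟩; exact ⟨rfl, hbit⟩
  · rintro w v ⟨hb, hbit⟩
    exact ⟨⟨w.base, v.bit⟩, ⟨rfl, hbit⟩, by cases v; simp_all⟩
  · refine ⟨⟨false, false⟩, 0, 1, ?_⟩
    have iter : ∀ k (x : HTW Bool),
        (fun x : HTW Bool => (⟨true, x.bit⟩ : HTW Bool))^[k + 1] x = ⟨true, x.bit⟩ := by
      intro k
      induction k with
      | zero => intro x; rfl
      | succ n ih => intro x; rw [Function.iterate_succ_apply, ih]
    rintro (h | h)
    · have h1 := h 1 ⟨true, false⟩ (le_refl _) ?_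
      · rcases h1 with ⟨_, h⟩ | ⟨h, _⟩ <;> simp_all
      · intro k
        cases k with
        | zero => exact Or.inl ⟨rfl, rfl⟩
        | succ n => rw [iter]; exact Or.inl ⟨rfl, rfl⟩
    · have h1 := h 0 ⟨false, true⟩ ⟨rfl, by simp⟩ ?_
      · rcases h1 with ⟨_, h⟩ | ⟨h, _⟩ <;> simp_all
      · intro k
        cases k with
        | zero => exact Or.inr ⟨rfl, rfl⟩
        | succ n => rw [iter]; exact Or.inr ⟨rfl, rfl⟩
end
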